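/- (Non-robustness of the binary readout of the non-robust multi-class network) Let d ≥ 3 and k ≥ 2 with 2(k+1) · ln d ≤ √d, let μ : Fin k → ℝ^d be orthogonal equinorm cluster features with binary cluster labels s, and suppose for some real c ≥ 1 that J₊ and J₋ are nonempty with |J₊| ≥ k/(1+c) and |J₋| ≥ k/(1+c). Consider the multi-class network with f_j(x) = ReLU(⟨μ_j + Σ_{l : s l = s j} μ_l, x⟩), softmax probabilities p_j(x) = exp(f_j(x)) / Σ_{l ∈ Fin k} exp(f_l(x)), and binary readout F^binary(x) = Σ_{j∈J₊} p_j(x) − Σ_{j∈J₋} p_j(x). Set δ := 3(1+c) · √(d/k). Then the probability over (J, ξ) ~ (uniform on Fin k) ⊗ γ_d that sgn(F^binary(μ_J + ξ + ρ)) = s J holds for ALL perturbations ρ with ‖ρ‖ ≤ δ is at most 2k · d^{−(ln d)/2}. -/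

import Mathlib

open MeasureTheory ProbabilityTheory Real Finset
open scoped RealInnerProductSpace NNReal ENNReal

/-- The standard Gaussian measure on `ℝ^d`. -/
noncomputable def stdGaussian (d : ℕ) : Measure (EuclideanSpace ℝ (Fin d)) :=
  (Measure.pi fun _ : Fin d => gaussianReal 0 1).map (WithLp.toLp 2)

/-- The sign function: `1` on positive reals, `-1` otherwise. -/
noncomputable def sgn (z : ℝ) : ℝ := if 0 < z then 1 else -1

/-- The ReLU activation. -/
noncomputable def relu (z : ℝ) : ℝ := max z 0

/-- The `j`-th component of the non-robust multi-class network. -/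
noncomputable def fMulti {d k : ℕ} (μ : Fin k → EuclideanSpace ℝ (Fin d)) (s : Fin k → ℝ)
    (j : Fin k) (x : EuclideanSpace ℝ (Fin d)) : ℝ :=
  relu ⟪μ j + ∑ l ∈ univ.filter (fun l => s l = s j), μ l, x⟫

/-- The softmax probability of class `j` under the non-robust multi-class network. -/
noncomputable def pMulti {d k : ℕ} (μ : Fin k → EuclideanSpace ℝ (Fin d)) (s : Fin k → ℝ)
    (j : Fin k) (x : EuclideanSpace ℝ (Fin d)) : ℝ :=
  Real.exp (fMulti μ s j x) / ∑ l : Fin k, Real.exp (fMulti μ s l x)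

/-- The binary readout of the non-robust multi-class network. -/
noncomputable def Fbinary {d k : ℕ} (μ : Fin k → EuclideanSpace ℝ (Fin d)) (s : Fin k → ℝ)
    (x : EuclideanSpace ℝ (Fin d)) : ℝ :=
  ∑ j ∈ univ.filter (fun j => s j = 1), pMulti μ s j x -
    ∑ j ∈ univ.filter (fun j => s j = -1), pMulti μ s j x

instance stdGaussian_isProbabilityMeasure (d : ℕ) : IsProbabilityMeasure (stdGaussian d) :=
  Measure.isProbabilityMeasure_map (WithLp.measurable_toLp 2 _).aemeasurable


lemma gauss_pdf_mul (a x : ℝ) :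
    gaussianPDFReal 0 1 x * Real.exp (a * x) = Real.exp (a^2/2) * gaussianPDFReal a 1 x := by
  simp only [gaussianPDFReal]
  rw [mul_assoc, ← Real.exp_add, mul_left_comm, ← Real.exp_add]
  congr 1
  push_cast
  ring

lemma smul_pdf_eq (a : ℝ) : (fun x => ((gaussianPDFReal 0 1 x).toNNReal : ℝ≥0) • Real.exp (a * x))
      = fun x => Real.exp (a^2/2) * gaussianPDFReal a 1 x := by
  funext x
  rw [NNReal.smul_def, smul_eq_mul, Real.coe_toNNReal _ (gaussianPDFReal_nonneg 0 1 x)]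
  exact gauss_pdf_mul a x

lemma integrable_exp_mul_gauss (a : ℝ) :
    Integrable (fun x => Real.exp (a * x)) (gaussianReal 0 1) := by
  rw [gaussianReal_of_var_ne_zero 0 one_ne_zero]
  have hm : Measurable fun x => (gaussianPDFReal 0 1 x).toNNReal :=
    (measurable_gaussianPDFReal 0 1).real_toNNReal
  rw [show (gaussianPDF 0 1) = fun x => ((gaussianPDFReal 0 1 x).toNNReal : ENNReal) from rfl]
  rw [integrable_withDensity_iff_integrable_smul hm, smul_pdf_eq a]
  exact (integrable_gaussianPDFReal a 1).const_mul _

lemma integral_exp_mul_gauss (a : ℝ) :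
    ∫ x, Real.exp (a * x) ∂(gaussianReal 0 1) = Real.exp (a^2/2) := by
  rw [gaussianReal_of_var_ne_zero 0 one_ne_zero]
  have hm : Measurable fun x => (gaussianPDFReal 0 1 x).toNNReal :=
    (measurable_gaussianPDFReal 0 1).real_toNNReal
  rw [show (gaussianPDF 0 1) = fun x => ((gaussianPDFReal 0 1 x).toNNReal : ENNReal) from rfl]
  rw [integral_withDensity_eq_integral_smul hm, smul_pdf_eq a, integral_const_mul,
    integral_gaussianPDFReal_eq_one a one_ne_zero, mul_one]

lemma integral_exp_sum_pi (d : ℕ) (w : Fin d → ℝ) :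
    ∫ x : Fin d → ℝ, ∏ i, Real.exp (w i * x i) ∂(Measure.pi fun _ => gaussianReal 0 1)
      = ∏ i, Real.exp ((w i)^2/2) := by
  letI : MeasureSpace ℝ := ⟨gaussianReal 0 1⟩
  letI : SigmaFinite (volume : Measure ℝ) := by
    show SigmaFinite (gaussianReal 0 1); infer_instance
  have h := MeasureTheory.integral_fintype_prod_eq_prod (𝕜 := ℝ) (μ := fun _ : Fin d => gaussianReal 0 1)
    (fun i (x : ℝ) => Real.exp (w i * x))
  rw [h]
  exact Finset.prod_congr rfl fun i _ => integral_exp_mul_gauss (w i)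

lemma integrable_exp_sum_pi (d : ℕ) (w : Fin d → ℝ) :
    Integrable (fun x : Fin d → ℝ => ∏ i, Real.exp (w i * x i))
      (Measure.pi fun _ => gaussianReal 0 1) := by
  letI : MeasureSpace ℝ := ⟨gaussianReal 0 1⟩
  letI : SigmaFinite (volume : Measure ℝ) := by
    show SigmaFinite (gaussianReal 0 1); infer_instance
  have h := MeasureTheory.Integrable.fintype_prod_dep (E := fun _ : Fin d => ℝ)
    (f := fun i (x : ℝ) => Real.exp (w i * x)) (fun i => integrable_exp_mul_gauss (w i))
  exact h

lemma exp_inner_eq_prod {d : ℕ} (w ξ : EuclideanSpace ℝ (Fin d)) :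
    Real.exp ⟪w, ξ⟫ = ∏ i, Real.exp (w i * ξ i) := by
  rw [← Real.exp_sum]
  congr 1; simp [PiLp.inner_apply, mul_comm]

lemma integral_exp_inner {d : ℕ} (w : EuclideanSpace ℝ (Fin d)) :
    ∫ ξ, Real.exp ⟪w, ξ⟫ ∂(stdGaussian d) = Real.exp (‖w‖^2/2) := by
  simp_rw [exp_inner_eq_prod w]
  have h : ∫ ξ : EuclideanSpace ℝ (Fin d), ∏ i, Real.exp (w i * ξ i) ∂(stdGaussian d)
      = ∫ x : Fin d → ℝ, ∏ i, Real.exp (w i * x i) ∂(Measure.pi fun _ => gaussianReal 0 1) := by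
    rw [_root_.stdGaussian, ← MeasurableEquiv.coe_toLp, integral_map_equiv]; rfl
  rw [h, integral_exp_sum_pi, ← Real.exp_sum]
  congr 1
  rw [← real_inner_self_eq_norm_sq, PiLp.inner_apply]
  simp [PiLp.inner_apply, RCLike.inner_apply, div_eq_mul_inv, Finset.sum_mul, sq]

lemma integrable_exp_inner {d : ℕ} (w : EuclideanSpace ℝ (Fin d)) :
    Integrable (fun ξ => Real.exp ⟪w, ξ⟫) (stdGaussian d) := by
  simp_rw [exp_inner_eq_prod w]
  rw [_root_.stdGaussian, ← MeasurableEquiv.coe_toLp, integrable_map_equiv]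
  exact integrable_exp_sum_pi d w

lemma stdGaussian_tail {d : ℕ} (w : EuclideanSpace ℝ (Fin d)) (hw : w ≠ 0) (t : ℝ) (ht : 0 ≤ t) :
    stdGaussian d {ξ | t * ‖w‖ ≤ ⟪w, ξ⟫} ≤ ENNReal.ofReal (Real.exp (-t^2/2)) := by
  have hwpos : 0 < ‖w‖ := norm_pos_iff.2 hw
  set lam := t / ‖w‖ with hlam
  have hlamnn : 0 ≤ lam := div_nonneg ht hwpos.le
  have hint : Integrable (fun ξ : EuclideanSpace ℝ (Fin d) => Real.exp (lam * ⟪w, ξ⟫))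
      (stdGaussian d) := by
    have := integrable_exp_inner (lam • w)
    simp only [real_inner_smul_left] at this
    exact this
  have hlw : lam * ‖w‖ = t := div_mul_cancel₀ t hwpos.ne'
  have h := measure_ge_le_exp_mul_mgf (μ := stdGaussian d)
    (X := fun ξ => ⟪w, ξ⟫) (t := lam) (t * ‖w‖) hlamnn hint
  have hmgf : mgf (fun ξ => ⟪w, ξ⟫) (stdGaussian d) lam = Real.exp (t^2/2) := by
    have h2 : mgf (fun ξ => ⟪w, ξ⟫) (stdGaussian d) lam
        = ∫ ξ, Real.exp ⟪lam • w, ξ⟫ ∂(stdGaussian d) := by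
      simp_rw [mgf, real_inner_smul_left]
    rw [h2, integral_exp_inner, norm_smul, Real.norm_eq_abs, abs_of_nonneg hlamnn, hlw]
  rw [hmgf] at h
  have hexp : Real.exp (-lam * (t * ‖w‖)) * Real.exp (t^2/2) = Real.exp (-t^2/2) := by
    rw [← Real.exp_add]
    congr 1
    rw [show -lam * (t * ‖w‖) = -(t * (lam * ‖w‖)) by ring, hlw]
    ring
  rw [hexp] at h
  rw [← ENNReal.ofReal_toReal (measure_ne_top (stdGaussian d) _)]
  exact ENNReal.ofReal_le_ofReal h

variable {d k : ℕ} {μ : Fin k → EuclideanSpace ℝ (Fin d)}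

lemma inner_mu_mu (hnorm : ∀ j, ‖μ j‖ = Real.sqrt d)
    (horth : ∀ i j, i ≠ j → ⟪μ i, μ j⟫ = 0) (i j : Fin k) :
    ⟪μ i, μ j⟫ = if i = j then (d : ℝ) else 0 := by
  by_cases h : i = j
  · subst h
    rw [if_pos rfl, real_inner_self_eq_norm_sq, hnorm, Real.sq_sqrt (Nat.cast_nonneg d)]
  · rw [if_neg h]; exact horth i j h

lemma inner_sum_mu (hnorm : ∀ j, ‖μ j‖ = Real.sqrt d)
    (horth : ∀ i j, i ≠ j → ⟪μ i, μ j⟫ = 0) (A : Finset (Fin k)) (j : Fin k) :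
    ⟪∑ l ∈ A, μ l, μ j⟫ = if j ∈ A then (d : ℝ) else 0 := by
  rw [sum_inner]
  rw [Finset.sum_congr rfl fun l _ => inner_mu_mu hnorm horth l j]
  exact Finset.sum_ite_eq' A j fun _ => (d : ℝ)

lemma inner_mu_sum (hnorm : ∀ j, ‖μ j‖ = Real.sqrt d)
    (horth : ∀ i j, i ≠ j → ⟪μ i, μ j⟫ = 0) (j : Fin k) (A : Finset (Fin k)) :
    ⟪μ j, ∑ l ∈ A, μ l⟫ = if j ∈ A then (d : ℝ) else 0 := by
  rw [real_inner_comm]; exact inner_sum_mu hnorm horth A j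

lemma inner_sum_sum (hnorm : ∀ j, ‖μ j‖ = Real.sqrt d)
    (horth : ∀ i j, i ≠ j → ⟪μ i, μ j⟫ = 0) (A B : Finset (Fin k)) :
    ⟪∑ l ∈ A, μ l, ∑ m ∈ B, μ m⟫ = (d : ℝ) * (A ∩ B).card := by
  rw [sum_inner]
  rw [Finset.sum_congr rfl fun l _ => inner_mu_sum hnorm horth l B]
  rw [Finset.sum_ite_mem A B fun _ => (d : ℝ)]
  rw [Finset.sum_const]
  simp [mul_comm]

set_option maxHeartbeats 1000000 in
lemma core_attack (hd : 3 ≤ d) (hk : 2 ≤ k)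
    (hlog : 2 * (k + 1) * Real.log d ≤ Real.sqrt d)
    (hnorm : ∀ j, ‖μ j‖ = Real.sqrt d)
    (horth : ∀ i j, i ≠ j → ⟪μ i, μ j⟫ = 0)
    (s : Fin k → ℝ) (c : ℝ) (hc : 1 ≤ c)
    (σ : ℝ) (hσ : σ = 1 ∨ σ = -1)
    (hsσ : ∀ l, s l = σ ∨ s l = -σ)
    (hne : (univ.filter (fun l => s l = -σ)).Nonempty)
    (hm1 : (k : ℝ) / (1 + c) ≤ (univ.filter (fun l => s l = σ)).card)
    (hm2 : (k : ℝ) / (1 + c) ≤ (univ.filter (fun l => s l = -σ)).card)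
    (J : Fin k) (hJ : s J = σ)
    (ξ : EuclideanSpace ℝ (Fin d))
    (hξ : ∀ j, |⟪μ j + ∑ l ∈ univ.filter (fun l => s l = s j), μ l, ξ⟫| ≤
      Real.log d * ‖μ j + ∑ l ∈ univ.filter (fun l => s l = s j), μ l‖) :
    ∃ ρ : EuclideanSpace ℝ (Fin d), ‖ρ‖ ≤ 3 * (1 + c) * Real.sqrt ((d : ℝ) / k) ∧
      (∑ j ∈ univ.filter (fun l => s l = σ), Real.exp (fMulti μ s j (μ J + ξ + ρ))) <
      ∑ j ∈ univ.filter (fun l => s l = -σ), Real.exp (fMulti μ s j (μ J + ξ + ρ)) := by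

  classical
  set Fs := univ.filter (fun l => s l = σ) with hFs
  set Ft := univ.filter (fun l => s l = -σ) with hFt
  have hd0 : (0 : ℝ) < d := by
    have : (0:ℕ) < d := by omega
    exact_mod_cast this
  have hd3 : (3 : ℝ) ≤ d := by exact_mod_cast hd
  have hk0 : (0 : ℝ) < k := by
    have : (0:ℕ) < k := by omega
    exact_mod_cast this
  have hc0 : (0 : ℝ) < 1 + c := by linarith
  have hσne : σ ≠ -σ := by rcases hσ with h | h <;> rw [h] <;> norm_num
  have hlog0 : (1 : ℝ) ≤ Real.log d := by
    have he : Real.exp 1 < (d : ℝ) :=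
      lt_of_lt_of_le (by have := Real.exp_one_lt_d9; linarith) hd3
    exact le_of_lt ((Real.lt_log_iff_exp_lt hd0).2 he)
  have hsq : Real.sqrt d * Real.sqrt d = d := Real.mul_self_sqrt hd0.le
  have hsqnn : (0:ℝ) ≤ Real.sqrt d := Real.sqrt_nonneg _
  have hk1 : (0:ℝ) < (k:ℝ) + 1 := by linarith
  have h2k : 2 * ((k:ℝ) + 1) ≤ Real.sqrt d := by nlinarith [hlog, hlog0, hk1]
  have hkd : (k : ℝ) < d := by nlinarith
  have hdisj : Fs ∩ Ft = ∅ := by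
    ext l
    rw [hFs, hFt]
    simp only [mem_inter, mem_filter, mem_univ, true_and, notMem_empty, iff_false, not_and]
    intro h1 h2
    exact hσne (h1 ▸ h2)
  have hts : Ft ∩ Fs = ∅ := by rw [Finset.inter_comm]; exact hdisj
  set a := ((Fs.card : ℝ)) with ha
  set b := ((Ft.card : ℝ)) with hb
  have hcards : a + b = (k:ℝ) := by
    have hFt' : Ft = univ.filter (fun l => ¬ s l = σ) := by
      rw [hFt]
      apply filter_congr
      intro l _
      constructor
      · intro h h'
        exact hσne (h' ▸ h)
      · intro h
        rcases hsσ l with h' | h'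
        · exact absurd h' h
        · exact h'
    have hn : Fs.card + Ft.card = k := by
      rw [hFs, hFt', Finset.card_filter_add_card_filter_not, card_univ,
        Fintype.card_fin]
    rw [ha, hb]
    exact_mod_cast hn
  have hak : a ≤ (k:ℝ) := by linarith [hb ▸ (Nat.cast_nonneg Ft.card : (0:ℝ) ≤ b)]
  have hbk : b ≤ (k:ℝ) := by linarith [ha ▸ (Nat.cast_nonneg Fs.card : (0:ℝ) ≤ a)]
  set τ := 3 * (1 + c) / k with hτ
  have hτ0 : (0:ℝ) < τ := by positivity
  have hτa : 3 ≤ τ * a := by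
    have h1 : τ * ((k:ℝ)/(1+c)) ≤ τ * a := mul_le_mul_of_nonneg_left hm1 hτ0.le
    have h2 : τ * ((k:ℝ)/(1+c)) = 3 := by
      rw [hτ]; field_simp
    linarith
  have hτb : 3 ≤ τ * b := by
    have h1 : τ * ((k:ℝ)/(1+c)) ≤ τ * b := mul_le_mul_of_nonneg_left hm2 hτ0.le
    have h2 : τ * ((k:ℝ)/(1+c)) = 3 := by
      rw [hτ]; field_simp
    linarith
  set Ss := (∑ l ∈ Fs, μ l) with hSs
  set St := (∑ l ∈ Ft, μ l) with hSt
  refine ⟨τ • (St - Ss), ?_, ?_⟩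
  · have hv : ‖St - Ss‖ ^ 2 = (d : ℝ) * k := by
      rw [← real_inner_self_eq_norm_sq, inner_sub_left, inner_sub_right, inner_sub_right,
        hSs, hSt, inner_sum_sum hnorm horth, inner_sum_sum hnorm horth,
        inner_sum_sum hnorm horth, inner_sum_sum hnorm horth, inter_self, inter_self,
        hts, hdisj]
      rw [card_empty]
      rw [← ha, ← hb]
      push_cast
      nlinarith [hcards]
    have hnρ : ‖τ • (St - Ss)‖ = τ * ‖St - Ss‖ := by
      rw [norm_smul, Real.norm_eq_abs, abs_of_pos hτ0]
    rw [hnρ]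
    have hδnn : (0:ℝ) ≤ 3 * (1 + c) * Real.sqrt ((d:ℝ)/k) := by positivity
    apply le_of_pow_le_pow_left₀ two_ne_zero hδnn
    have heq : (τ * ‖St - Ss‖)^2 = (3*(1+c))^2 * ((d:ℝ)/k) := by
      rw [mul_pow, hv, hτ]
      field_simp
    have heq2 : (3*(1+c)*Real.sqrt ((d:ℝ)/k))^2 = (3*(1+c))^2 * ((d:ℝ)/k) := by
      rw [mul_pow, Real.sq_sqrt (by positivity : (0:ℝ) ≤ (d:ℝ)/k)]
    rw [heq, heq2]
  · set ρ := τ • (St - Ss) with hρ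
    set x := μ J + ξ + ρ with hx
    set B := Real.log d * Real.sqrt (((k:ℝ) + 3) * d) with hB
    have hBnn : (0:ℝ) ≤ B := by
      rw [hB]; positivity
    have hlogsq : (Real.log d)^2 ≤ (d:ℝ) / (4*((k:ℝ)+1)^2) := by
      rw [le_div_iff₀ (by positivity)]
      have hh : (2*((k:ℝ)+1)*Real.log d) * (2*((k:ℝ)+1)*Real.log d)
          ≤ Real.sqrt d * Real.sqrt d :=
        mul_self_le_mul_self (by positivity) hlog
      rw [hsq] at hh
      calc (Real.log d)^2 * (4*((k:ℝ)+1)^2)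
          = (2*((k:ℝ)+1)*Real.log d) * (2*((k:ℝ)+1)*Real.log d) := by ring
        _ ≤ (d:ℝ) := hh
    have hBd : B < (d:ℝ) := by
      have h1 : B^2 = (Real.log d)^2 * (((k:ℝ)+3) * d) := by
        rw [hB, mul_pow, Real.sq_sqrt (by positivity : (0:ℝ) ≤ ((k:ℝ)+3)*d)]
      have h2 : B^2 < (d:ℝ)^2 := by
        rw [h1]
        calc (Real.log d)^2 * (((k:ℝ)+3)*d)
            ≤ ((d:ℝ)/(4*((k:ℝ)+1)^2)) * (((k:ℝ)+3)*d) :=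
              mul_le_mul_of_nonneg_right hlogsq (by positivity)
          _ < (d:ℝ)^2 := by
              rw [div_mul_eq_mul_div, div_lt_iff₀ (by positivity)]
              nlinarith [(by positivity : (0:ℝ) < (d:ℝ)^2),
                (by positivity : (0:ℝ) < (k:ℝ)*(d:ℝ)^2),
                (by positivity : (0:ℝ) < (k:ℝ)^2*(d:ℝ)^2)]
      exact lt_of_pow_lt_pow_left₀ 2 hd0.le h2
  
    have hw2 : ∀ j : Fin k, ‖μ j + ∑ l ∈ univ.filter (fun l => s l = s j), μ l‖^2
        ≤ ((k:ℝ)+3)*d := by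
      intro j
      rw [← real_inner_self_eq_norm_sq, inner_add_left, inner_add_right, inner_add_right,
        inner_mu_mu hnorm horth, inner_mu_sum hnorm horth, inner_sum_mu hnorm horth,
        inner_sum_sum hnorm horth]
      have hjmem : j ∈ univ.filter (fun l => s l = s j) := by simp
      rw [if_pos rfl, if_pos hjmem, inter_self]
      have hcle : (((univ.filter (fun l => s l = s j)).card : ℝ)) ≤ k := by
        have := card_filter_le (univ : Finset (Fin k)) (fun l => s l = s j)
        have h2 : (univ : Finset (Fin k)).card = k := by rw [card_univ, Fintype.card_fin]
        exact_mod_cast h2 ▸ this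
      nlinarith [hd0]
    have hnoise : ∀ j : Fin k,
        |⟪μ j + ∑ l ∈ univ.filter (fun l => s l = s j), μ l, ξ⟫| ≤ B := by
      intro j
      refine (hξ j).trans ?_
      rw [hB]
      apply mul_le_mul_of_nonneg_left _ (by linarith : (0:ℝ) ≤ Real.log d)
      rw [show ‖μ j + ∑ l ∈ univ.filter (fun l => s l = s j), μ l‖
          = Real.sqrt (‖μ j + ∑ l ∈ univ.filter (fun l => s l = s j), μ l‖^2) from
        (Real.sqrt_sq (norm_nonneg _)).symm]
      exact Real.sqrt_le_sqrt (hw2 j)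
    have hmems : ∀ j, s j = σ → j ∈ Fs := by
      intro j hj; rw [hFs, mem_filter]; exact ⟨mem_univ j, hj⟩
    have hmemt : ∀ j, s j = -σ → j ∈ Ft := by
      intro j hj; rw [hFt, mem_filter]; exact ⟨mem_univ j, hj⟩
    have hnmemt : ∀ j, s j = σ → j ∉ Ft := by
      intro j hj
      rw [hFt, mem_filter]
      rintro ⟨-, h2⟩
      exact hσne (hj ▸ h2)
    have hnmems : ∀ j, s j = -σ → j ∉ Fs := by
      intro j hj
      rw [hFs, mem_filter]
      rintro ⟨-, h2⟩
      exact hσne (h2.symm.trans hj)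
    have hipσ : ∀ j, s j = σ → ⟪μ j + Ss, x⟫ < 0 := by
      intro j hj
      have e1 : ⟪μ j + Ss, μ J⟫ ≤ 2 * d := by
        rw [inner_add_left, inner_mu_mu hnorm horth, hSs, inner_sum_mu hnorm horth,
          if_pos (hmems J hJ)]
        split_ifs <;> linarith
      have e2 : ⟪μ j + Ss, ρ⟫ = -(τ * ((d:ℝ) + d * a)) := by
        rw [hρ, real_inner_smul_right, inner_sub_right, inner_add_left, inner_add_left,
          hSs, hSt, inner_mu_sum hnorm horth, inner_mu_sum hnorm horth,
          inner_sum_sum hnorm horth, inner_sum_sum hnorm horth,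
          if_neg (hnmemt j hj), if_pos (hmems j hj), hdisj, inter_self, card_empty, ← ha]
        push_cast
        ring
      have e3 : |⟪μ j + Ss, ξ⟫| ≤ B := by
        have h := hnoise j
        simp only [hj] at h
        rwa [← hFs, ← hSs] at h
      have hexp : ⟪μ j + Ss, x⟫ = ⟪μ j + Ss, μ J⟫ + ⟪μ j + Ss, ξ⟫ + ⟪μ j + Ss, ρ⟫ := by
        rw [hx, inner_add_right, inner_add_right]
      have habs := (abs_le.1 e3).2
      have hτd : 3 * (d:ℝ) ≤ τ * ((d:ℝ) + d * a) := by nlinarith [hτa, hd0, hτ0]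
      rw [hexp, e2]
      linarith [hBd]
    have hipτ : ∀ j, s j = -σ → 2 * (d:ℝ) < ⟪μ j + St, x⟫ := by
      intro j hj
      have hjJ : j ≠ J := by
        intro h
        exact hσne (hJ.symm.trans (h ▸ hj))
      have e1 : ⟪μ j + St, μ J⟫ = 0 := by
        rw [inner_add_left, inner_mu_mu hnorm horth, hSt, inner_sum_mu hnorm horth,
          if_neg (hnmemt J hJ), if_neg hjJ, add_zero]
      have e2 : ⟪μ j + St, ρ⟫ = τ * ((d:ℝ) + d * b) := by
        rw [hρ, real_inner_smul_right, inner_sub_right, inner_add_left, inner_add_left,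
          hSs, hSt, inner_mu_sum hnorm horth, inner_mu_sum hnorm horth,
          inner_sum_sum hnorm horth, inner_sum_sum hnorm horth,
          if_neg (hnmems j hj), if_pos (hmemt j hj), hts, inter_self, card_empty, ← hb]
        push_cast
        ring
      have e3 : |⟪μ j + St, ξ⟫| ≤ B := by
        have h := hnoise j
        simp only [hj] at h
        rwa [← hFt, ← hSt] at h
      have hexp : ⟪μ j + St, x⟫ = ⟪μ j + St, μ J⟫ + ⟪μ j + St, ξ⟫ + ⟪μ j + St, ρ⟫ := by
        rw [hx, inner_add_right, inner_add_right]
      have habs := (abs_le.1 e3).1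
      have hτd : 3 * (d:ℝ) ≤ τ * ((d:ℝ) + d * b) := by nlinarith [hτb, hd0, hτ0]
      rw [hexp, e1, e2]
      linarith [hBd]
    have hsumσ : (∑ j ∈ Fs, Real.exp (fMulti μ s j x)) = a := by
      have hone : ∀ j ∈ Fs, Real.exp (fMulti μ s j x) = 1 := by
        intro j hjm
        rw [hFs] at hjm
        have hj : s j = σ := (mem_filter.1 hjm).2
        simp only [fMulti, relu, hj]
        rw [← hFs, ← hSs, max_eq_right (hipσ j hj).le, Real.exp_zero]
      rw [Finset.sum_congr rfl hone, Finset.sum_const, nsmul_eq_mul, mul_one, ha]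
    have hsumτ : Real.exp (2 * (d:ℝ)) ≤ ∑ j ∈ Ft, Real.exp (fMulti μ s j x) := by
      obtain ⟨j0, hj0⟩ := hne
      have hj0t : j0 ∈ Ft := hj0
      rw [hFt] at hj0
      have hj0' : s j0 = -σ := (mem_filter.1 hj0).2
      have hterm : Real.exp (2 * (d:ℝ)) ≤ Real.exp (fMulti μ s j0 x) := by
        apply Real.exp_le_exp.2
        have : fMulti μ s j0 x = max ⟪μ j0 + St, x⟫ 0 := by
          simp only [fMulti, relu, hj0']
          rfl
        rw [this]
        exact le_trans (hipτ j0 hj0').le (le_max_left _ _)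
      have hmono : ∀ i ∈ Ft, (0:ℝ) ≤ Real.exp (fMulti μ s i x) := fun i _ => (Real.exp_pos _).le
      have hsingle := Finset.single_le_sum (f := fun j => Real.exp (fMulti μ s j x)) hmono hj0t
      exact hterm.trans hsingle
    have hfinal : a < Real.exp (2 * (d:ℝ)) := by
      have h1 : (d:ℝ) + 1 ≤ Real.exp d := Real.add_one_le_exp d
      have h2 : Real.exp (d:ℝ) ≤ Real.exp (2*(d:ℝ)) := Real.exp_le_exp.2 (by linarith)
      linarith
    rw [hsumσ]
    linarith


set_option maxHeartbeats 1000000 in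
theorem multiclass_binary_readout_nonrobust (d k : ℕ) (hd : 3 ≤ d) (hk : 2 ≤ k)
    (hlog : 2 * (k + 1) * Real.log d ≤ Real.sqrt d)
    (μ : Fin k → EuclideanSpace ℝ (Fin d))
    (hnorm : ∀ j, ‖μ j‖ = Real.sqrt d)
    (horth : ∀ i j, i ≠ j → ⟪μ i, μ j⟫ = 0)
    (s : Fin k → ℝ) (hs : ∀ j, s j = 1 ∨ s j = -1)
    (c : ℝ) (hc : 1 ≤ c)
    (hpos' : (univ.filter (fun j => s j = 1)).Nonempty)
    (hneg' : (univ.filter (fun j => s j = -1)).Nonempty)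
    (hpos : (k : ℝ) / (1 + c) ≤ (univ.filter (fun j => s j = 1)).card)
    (hneg : (k : ℝ) / (1 + c) ≤ (univ.filter (fun j => s j = -1)).card) :
    (((k : ENNReal)⁻¹ • (Measure.count : Measure (Fin k))).prod (stdGaussian d))
        {p : Fin k × EuclideanSpace ℝ (Fin d) |
          ∀ ρ : EuclideanSpace ℝ (Fin d), ‖ρ‖ ≤ 3 * (1 + c) * Real.sqrt (d / k) →
            sgn (Fbinary μ s (μ p.1 + p.2 + ρ)) = s p.1} ≤
      ENNReal.ofReal (2 * k * (d : ℝ) ^ (-(Real.log d) / 2)) := by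
  classical
  have hd0 : (0:ℝ) < d := by
    have : (0:ℕ) < d := by omega
    exact_mod_cast this
  have hlognn : (0:ℝ) ≤ Real.log d := Real.log_nonneg (by exact_mod_cast (by omega : 1 ≤ d))
  set w : Fin k → EuclideanSpace ℝ (Fin d) :=
    fun j => μ j + ∑ l ∈ univ.filter (fun l => s l = s j), μ l with hw
  set G : Set (EuclideanSpace ℝ (Fin d)) :=
    {ξ | ∀ j, |⟪w j, ξ⟫| ≤ Real.log d * ‖w j‖} with hG
  have hwne : ∀ j, w j ≠ 0 := by
    intro j h
    have h2 : ⟪w j, μ j⟫ = 0 := by rw [h, inner_zero_left]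
    simp only [hw] at h2
    rw [inner_add_left, inner_mu_mu hnorm horth, if_pos rfl,
      inner_sum_mu hnorm horth, if_pos (by simp : j ∈ univ.filter (fun l => s l = s j))] at h2
    linarith
  -- Step 1: containment
  have hsub : {p : Fin k × EuclideanSpace ℝ (Fin d) |
        ∀ ρ : EuclideanSpace ℝ (Fin d), ‖ρ‖ ≤ 3 * (1 + c) * Real.sqrt (d / k) →
          sgn (Fbinary μ s (μ p.1 + p.2 + ρ)) = s p.1} ⊆ Set.univ ×ˢ Gᶜ := by
    rintro ⟨J, ξ⟩ hp
    refine ⟨Set.mem_univ _, ?_⟩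
    intro hGm
    have hξ : ∀ j, |⟪μ j + ∑ l ∈ univ.filter (fun l => s l = s j), μ l, ξ⟫| ≤
        Real.log d * ‖μ j + ∑ l ∈ univ.filter (fun l => s l = s j), μ l‖ := hGm
    rcases hs J with hJ1 | hJ1
    · obtain ⟨ρ, hρn, hlt⟩ := core_attack hd hk hlog hnorm horth s c hc 1 (Or.inl rfl)
        hs hneg' hpos hneg J hJ1 ξ hξ
      have hsgn := hp ρ hρn
      have hZ' : (0:ℝ) < ∑ l : Fin k, Real.exp (fMulti μ s l (μ J + ξ + ρ)) :=
        Finset.sum_pos (fun l _ => Real.exp_pos _) ⟨⟨0, by omega⟩, mem_univ _⟩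
      have hFb : Fbinary μ s (μ J + ξ + ρ) < 0 := by
        rw [Fbinary]
        simp only [pMulti]
        rw [← Finset.sum_div, ← Finset.sum_div, div_sub_div_same]
        exact div_neg_of_neg_of_pos (by linarith) hZ'
      rw [sgn, if_neg (by linarith), hJ1] at hsgn
      norm_num at hsgn
    · have hsσ : ∀ l, s l = -1 ∨ s l = -(-1:ℝ) := by
        intro l
        rcases hs l with h | h
        · right; rw [h]; norm_num
        · left; exact h
      have hne2 : (univ.filter (fun l => s l = -(-1:ℝ))).Nonempty := by
        simpa only [neg_neg] using hpos'
      have hm2' : (k : ℝ) / (1 + c) ≤ (univ.filter (fun l => s l = -(-1:ℝ))).card := by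
        simpa only [neg_neg] using hpos
      obtain ⟨ρ, hρn, hlt⟩ := core_attack hd hk hlog hnorm horth s c hc (-1) (Or.inr rfl)
        hsσ hne2 hneg hm2' J hJ1 ξ hξ
      simp only [neg_neg] at hlt
      have hsgn := hp ρ hρn
      have hZ' : (0:ℝ) < ∑ l : Fin k, Real.exp (fMulti μ s l (μ J + ξ + ρ)) :=
        Finset.sum_pos (fun l _ => Real.exp_pos _) ⟨⟨0, by omega⟩, mem_univ _⟩
      have hFb : 0 < Fbinary μ s (μ J + ξ + ρ) := by
        rw [Fbinary]
        simp only [pMulti]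
        rw [← Finset.sum_div, ← Finset.sum_div, div_sub_div_same]
        exact div_pos (by linarith) hZ'
      rw [sgn, if_pos hFb, hJ1] at hsgn
      norm_num at hsgn
  refine le_trans (measure_mono hsub) ?_
  rw [Measure.prod_prod]
  have hcount : ((k : ENNReal)⁻¹ • (Measure.count : Measure (Fin k))) Set.univ = 1 := by
    rw [Measure.smul_apply, Measure.count_univ, ENat.card_eq_coe_fintype_card, Fintype.card_fin,
      ENat.toENNReal_coe, smul_eq_mul,
      ENNReal.inv_mul_cancel (by exact_mod_cast (by omega : k ≠ 0))
        (ENNReal.natCast_ne_top k)]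
  rw [hcount, one_mul]
  -- Step 2: union bound and Gaussian tails
  have hGc : Gᶜ ⊆ ⋃ j : Fin k,
      ({ξ | Real.log d * ‖w j‖ ≤ ⟪w j, ξ⟫} ∪ {ξ | Real.log d * ‖w j‖ ≤ ⟪-(w j), ξ⟫}) := by
    intro ξ hξ
    rw [hG] at hξ
    simp only [Set.mem_compl_iff, Set.mem_setOf_eq, not_forall, not_le] at hξ
    obtain ⟨j, hj⟩ := hξ
    refine Set.mem_iUnion.2 ⟨j, ?_⟩
    rcases le_abs.1 hj.le with h | h
    · exact Or.inl h
    · refine Or.inr ?_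
      show Real.log d * ‖w j‖ ≤ ⟪-(w j), ξ⟫
      rw [inner_neg_left]
      exact h
  calc (stdGaussian d) Gᶜ
      ≤ (stdGaussian d) (⋃ j : Fin k,
        ({ξ | Real.log d * ‖w j‖ ≤ ⟪w j, ξ⟫} ∪ {ξ | Real.log d * ‖w j‖ ≤ ⟪-(w j), ξ⟫})) :=
        measure_mono hGc
    _ ≤ ∑' j : Fin k, (stdGaussian d)
        ({ξ | Real.log d * ‖w j‖ ≤ ⟪w j, ξ⟫} ∪ {ξ | Real.log d * ‖w j‖ ≤ ⟪-(w j), ξ⟫}) :=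
        measure_iUnion_le _
    _ = ∑ j : Fin k, (stdGaussian d)
        ({ξ | Real.log d * ‖w j‖ ≤ ⟪w j, ξ⟫} ∪ {ξ | Real.log d * ‖w j‖ ≤ ⟪-(w j), ξ⟫}) :=
        tsum_fintype _
    _ ≤ ∑ _j : Fin k, ENNReal.ofReal (2 * Real.exp (-(Real.log d)^2/2)) := by
        apply Finset.sum_le_sum
        intro j _
        have hA := stdGaussian_tail (w j) (hwne j) (Real.log d) hlognn
        have hB := stdGaussian_tail (-(w j)) (neg_ne_zero.2 (hwne j)) (Real.log d) hlognn
        rw [norm_neg] at hB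
        refine (measure_union_le _ _).trans ?_
        refine (add_le_add hA hB).trans (le_of_eq ?_)
        rw [← ENNReal.ofReal_add (Real.exp_pos _).le (Real.exp_pos _).le]
        congr 1
        ring
    _ = ENNReal.ofReal (2 * k * (d : ℝ) ^ (-(Real.log d) / 2)) := by
        rw [Finset.sum_const, card_univ, Fintype.card_fin, nsmul_eq_mul]
        rw [show ((k:ℝ≥0∞)) = ENNReal.ofReal (k:ℝ) from (ENNReal.ofReal_natCast k).symm]
        rw [← ENNReal.ofReal_mul (Nat.cast_nonneg k)]
        congr 1
        rw [Real.rpow_def_of_pos hd0,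
          show Real.log d * (-(Real.log d)/2) = -(Real.log d)^2/2 by ring]
        ring
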